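/- For positive integers β and γ and n ≥ 1, the identity (-1)^n * C((1-β)n - γ, n) + (-1)^n * (β-1) * C((1-β)n - 1 - γ, n-1) = γ/(βn+γ) * C(βn+γ, n) holds, where C(x,m) is the generalized binomial coefficient. -/

import Mathlib

lemma choose_reflect (x : ℚ) (n : ℕ) :
    (-1 : ℚ)^n * Ring.choose x n = Ring.choose ((n:ℚ) - 1 - x) n := by
  have hfac : (n.factorial : ℚ) ≠ 0 := by exact_mod_cast n.factorial_ne_zero
  have h1 := Ring.descPochhammer_eq_factorial_smul_choose (R := ℚ) x n
  have h2 := Ring.descPochhammer_eq_factorial_smul_choose (R := ℚ) ((n:ℚ) - 1 - x) n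
  have h3 := Polynomial.descPochhammer_smeval_eq_ascPochhammer ((n:ℚ) - 1 - x) n
  have h4 := Polynomial.ascPochhammer_smeval_neg_eq_descPochhammer (R := ℚ) x n
  have hx : (n:ℚ) - 1 - x - n + 1 = -x := by ring
  rw [hx, h4] at h3
  rw [h3, h1] at h2
  simp only [nsmul_eq_mul] at h2
  apply mul_left_cancel₀ hfac
  rw [← h2, Units.smul_def, Int.coe_negOnePow_natCast, zsmul_eq_mul]; push_cast; ring

theorem stmt_8 (n β γ : ℕ) (hβ : 0 < β) (hγ : 0 < γ) (hn : 1 ≤ n) :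
    (-1 : ℚ) ^ n * Ring.choose (((1 : ℚ) - β) * n - γ) n +
        (-1 : ℚ) ^ n * ((β : ℚ) - 1) * Ring.choose (((1 : ℚ) - β) * n - 1 - γ) (n - 1)
      = ((γ : ℚ) / (β * n + γ)) * ((β * n + γ).choose n) := by
  obtain ⟨m, rfl⟩ : ∃ m, n = m + 1 := ⟨n - 1, (Nat.succ_pred_eq_of_pos hn).symm⟩
  obtain ⟨K, hK⟩ : ∃ K, β * (m + 1) + γ = K + 1 := ⟨β * (m + 1) + γ - 1, by omega⟩
  have hKq : (β : ℚ) * ((m : ℚ) + 1) + γ = (K : ℚ) + 1 := by exact_mod_cast congrArg (Nat.cast : ℕ → ℚ) hK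
  have t1 : (-1 : ℚ) ^ (m + 1) * Ring.choose (((1 : ℚ) - β) * (m + 1 : ℕ) - γ) (m + 1)
      = (K.choose (m + 1) : ℚ) := by
    rw [choose_reflect, show (((m + 1 : ℕ) : ℚ)) - 1 - (((1 : ℚ) - β) * (m + 1 : ℕ) - γ) = ((K : ℕ) : ℚ) by
      push_cast; linear_combination hKq, Ring.choose_natCast]
  have t2 : (-1 : ℚ) ^ m * Ring.choose (((1 : ℚ) - β) * (m + 1 : ℕ) - 1 - γ) m
      = (K.choose m : ℚ) := by
    rw [choose_reflect, show ((m : ℕ) : ℚ) - 1 - (((1 : ℚ) - β) * (m + 1 : ℕ) - 1 - γ) = ((K : ℕ) : ℚ) by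
      push_cast; linear_combination hKq, Ring.choose_natCast]
  have hsub : m + 1 - 1 = m := rfl
  rw [hsub, hK]
  have pascal : ((K + 1).choose (m + 1) : ℚ) = (K.choose m : ℚ) + (K.choose (m + 1) : ℚ) := by
    exact_mod_cast congrArg (Nat.cast : ℕ → ℚ) (Nat.choose_succ_succ K m)
  have hmul : ((K : ℚ) + 1) * (K.choose m : ℚ) = ((K + 1).choose (m + 1) : ℚ) * ((m : ℚ) + 1) := by
    exact_mod_cast congrArg (Nat.cast : ℕ → ℚ) (Nat.add_one_mul_choose_eq K m)
  have hD : (β : ℚ) * ((m + 1 : ℕ) : ℚ) + γ ≠ 0 := by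
    push_cast; rw [hKq]; positivity
  rw [div_mul_eq_mul_div, eq_div_iff hD]
  have hp : (-1 : ℚ) ^ (m + 1) = -(-1 : ℚ) ^ m := by ring
  rw [hp] at t1 ⊢
  push_cast at t1 t2 hD ⊢
  linear_combination ((β : ℚ) * (m + 1) + γ) * t1 - ((β : ℚ) * (m + 1) + γ) * ((β : ℚ) - 1) * t2
    - ((β : ℚ) * (m + 1) + γ) * pascal - (β : ℚ) * hmul
    - (β : ℚ) * (K.choose m : ℚ) * hKq
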